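/- The map T : (α₁,...,αₙ, θ₁,...,θ_{n-1}) ↦ (x₁,...,xₙ, y₁,...,y_{n-1}) defined by xₖ = cos(αₖ) sin(θₖ) for k = 1,...,n (with the convention θₙ = π/2) and yₖ = sin(α_{k+1}) cos(θₖ) for k = 1,...,n-1, has Jacobian determinant whose absolute value equals (sin²(αₙ)/sin(α₁)) ∏_{k=1}^{n-1} sin²(αₖ) sin²(θₖ), for angles in (0, π/2). -/

import Mathlib

open Matrix in
private lemma auxdet (m : ℕ) (M : Matrix (Fin (m+1) ⊕ Fin m) (Fin (m+1) ⊕ Fin m) ℝ)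
    (h1 : ∀ (k j : Fin (m+1)), j ≠ k → M (Sum.inl k) (Sum.inl j) = 0)
    (h2 : ∀ (k : Fin (m+1)) (j : Fin m), (j:ℕ) ≠ (k:ℕ) → M (Sum.inl k) (Sum.inr j) = 0)
    (h3 : ∀ (k : Fin m) (j : Fin (m+1)), (j:ℕ) ≠ (k:ℕ)+1 → M (Sum.inr k) (Sum.inl j) = 0)
    (h4 : ∀ (k j : Fin m), j ≠ k → M (Sum.inr k) (Sum.inr j) = 0) :
    M.det = (∏ k, M (Sum.inl k) (Sum.inl k)) * ∏ k, M (Sum.inr k) (Sum.inr k) := by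
  let e : (Fin (m+1) ⊕ Fin m) ≃ Fin (2*m+1) :=
    { toFun := Sum.elim (fun k => ⟨2*k, by omega⟩) (fun k => ⟨2*(k:ℕ)+1, by have := k.isLt; omega⟩)
      invFun := fun i => if h : (i:ℕ) % 2 = 0 then Sum.inl ⟨(i:ℕ)/2, by have := i.isLt; omega⟩
        else Sum.inr ⟨(i:ℕ)/2, by have := i.isLt; omega⟩
      left_inv := by
        rintro (k | k)
        · simp only [Sum.elim_inl]
          simp only [show 2 * (k:ℕ) % 2 = 0 by omega, eq_self_iff_true, dite_true, ↓reduceDIte]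
          congr 1; exact Fin.ext (by simp; try omega)
        · simp only [Sum.elim_inr]
          simp only [show ¬ ((2 * (k:ℕ) + 1) % 2 = 0) by omega, dite_false, ↓reduceDIte]
          congr 1; exact Fin.ext (by simp; try omega)
      right_inv := by
        intro i
        by_cases h : (i:ℕ) % 2 = 0
        · simp only [dif_pos h, Sum.elim_inl]; exact Fin.ext (by simp; try omega)
        · simp only [dif_neg h, Sum.elim_inr]; exact Fin.ext (by simp; try omega) }
  have key : ∀ (x : Fin (m+1) ⊕ Fin m), ((e x : Fin (2*m+1)) : ℕ) =
      Sum.elim (fun k : Fin (m+1) => 2*(k:ℕ)) (fun k : Fin m => 2*(k:ℕ)+1) x := by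
    rintro (k | k) <;> rfl
  have hdet : M.det = (M.submatrix e.symm e.symm).det :=
    (Matrix.det_submatrix_equiv_self e.symm M).symm
  rw [hdet, Matrix.det_of_upperTriangular]
  · rw [← Equiv.prod_comp e (fun i => (M.submatrix e.symm e.symm) i i)]
    have : ∀ x, (M.submatrix e.symm e.symm) (e x) (e x) = M x x := by
      intro x; simp [Matrix.submatrix_apply]
    simp only [this]
    rw [Fintype.prod_sum_type]
  · intro i j hij
    simp only [Matrix.submatrix_apply]
    have hi := key (e.symm i); have hj := key (e.symm j)
    rw [Equiv.apply_symm_apply] at hi hj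
    have hij' : (j : ℕ) < (i : ℕ) := hij
    rcases he1 : e.symm i with k | k <;> rcases he2 : e.symm j with l | l <;>
      rw [he1] at hi <;> rw [he2] at hj <;> simp only [Sum.elim_inl, Sum.elim_inr] at hi hj
    · exact h1 _ _ (fun h => by subst h; omega)
    · exact h2 _ _ (by omega)
    · exact h3 _ _ (by omega)
    · exact h4 _ _ (fun h => by subst h; omega)

set_option maxHeartbeats 1600000 in
open ContinuousLinearMap in
private lemma auxmain (m : ℕ)
    (T : (Fin (m+1) → ℝ) × (Fin m → ℝ) → (Fin (m+1) → ℝ) × (Fin m → ℝ))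
    (hT : T = fun p : (Fin (m+1) → ℝ) × (Fin m → ℝ) =>
      (fun k : Fin (m+1) => Real.cos (p.1 k) *
        Real.sin (if h : (k : ℕ) < m then p.2 ⟨k, h⟩ else Real.pi / 2),
       fun k : Fin m => Real.sin (p.1 ⟨(k : ℕ) + 1, by have := k.isLt; omega⟩) *
         Real.cos (p.2 k)))
    (α : Fin (m+1) → ℝ) (θ : Fin m → ℝ)
    (hα : ∀ k, α k ∈ Set.Ioo 0 (Real.pi / 2))
    (hθ : ∀ k, θ k ∈ Set.Ioo 0 (Real.pi / 2)) :
    |(fderiv ℝ T (α, θ)).det| =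
      (Real.sin (α ⟨m, by omega⟩)) ^ 2 / Real.sin (α ⟨0, by omega⟩) *
        ∏ k : Fin m,
          (Real.sin (α ⟨k, by have := k.isLt; omega⟩)) ^ 2 * (Real.sin (θ k)) ^ 2 := by
  classical
  set sθ : Fin (m+1) → ℝ := fun k =>
    Real.sin (if h : (k:ℕ) < m then θ ⟨k, h⟩ else Real.pi / 2) with hsθ
  set cθ : Fin (m+1) → ℝ := fun k =>
    Real.cos (if h : (k:ℕ) < m then θ ⟨k, h⟩ else Real.pi / 2) with hcθ
  set F : ((Fin (m+1) → ℝ) × (Fin m → ℝ)) →L[ℝ] (Fin (m+1) → ℝ) :=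
    ContinuousLinearMap.pi (fun k =>
      (-(Real.sin (α k) * sθ k)) • ((proj k).comp (fst ℝ (Fin (m+1) → ℝ) (Fin m → ℝ))) +
      (Real.cos (α k) * cθ k) • (if h : (k:ℕ) < m then
        (proj (⟨k, h⟩ : Fin m)).comp (snd ℝ (Fin (m+1) → ℝ) (Fin m → ℝ)) else 0)) with hFdef
  set G : ((Fin (m+1) → ℝ) × (Fin m → ℝ)) →L[ℝ] (Fin m → ℝ) :=
    ContinuousLinearMap.pi (fun k =>
      (Real.cos (α ⟨(k:ℕ)+1, by have := k.isLt; omega⟩) * Real.cos (θ k)) •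
        ((proj (⟨(k:ℕ)+1, by have := k.isLt; omega⟩ : Fin (m+1))).comp
          (fst ℝ (Fin (m+1) → ℝ) (Fin m → ℝ))) +
      (-(Real.sin (α ⟨(k:ℕ)+1, by have := k.isLt; omega⟩) * Real.sin (θ k))) •
        ((proj k).comp (snd ℝ (Fin (m+1) → ℝ) (Fin m → ℝ)))) with hGdef
  have hT' : HasFDerivAt T (F.prod G) (α, θ) := by
    rw [hT]
    apply HasFDerivAt.prodMk
    · apply hasFDerivAt_pi''
      intro k
      rw [hFdef, ContinuousLinearMap.proj_pi]
      have hproj1 : HasFDerivAt (fun p : (Fin (m+1) → ℝ) × (Fin m → ℝ) => p.1 k)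
          ((proj k).comp (fst ℝ (Fin (m+1) → ℝ) (Fin m → ℝ))) (α, θ) :=
        ((proj k).comp (fst ℝ (Fin (m+1) → ℝ) (Fin m → ℝ))).hasFDerivAt
      have hc : HasFDerivAt (fun p : (Fin (m+1) → ℝ) × (Fin m → ℝ) => Real.cos (p.1 k))
          ((-Real.sin (α k)) • ((proj k).comp (fst ℝ (Fin (m+1) → ℝ) (Fin m → ℝ)))) (α, θ) :=
        by have := (Real.hasDerivAt_cos (α k)).comp_hasFDerivAt (α, θ) hproj1; exact this
      by_cases h : (k:ℕ) < m
      · have hproj2 : HasFDerivAt (fun p : (Fin (m+1) → ℝ) × (Fin m → ℝ) => p.2 ⟨k, h⟩)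
            ((proj (⟨k,h⟩ : Fin m)).comp (snd ℝ (Fin (m+1) → ℝ) (Fin m → ℝ))) (α, θ) :=
          ((proj (⟨k,h⟩ : Fin m)).comp (snd ℝ (Fin (m+1) → ℝ) (Fin m → ℝ))).hasFDerivAt
        have hs : HasFDerivAt (fun p : (Fin (m+1) → ℝ) × (Fin m → ℝ) =>
            Real.sin (if h : (k:ℕ) < m then p.2 ⟨k, h⟩ else Real.pi / 2))
            ((Real.cos (θ ⟨k, h⟩)) •
              ((proj (⟨k,h⟩ : Fin m)).comp (snd ℝ (Fin (m+1) → ℝ) (Fin m → ℝ)))) (α, θ) := by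
          simp only [dif_pos h]
          exact (Real.hasDerivAt_sin (θ ⟨k,h⟩)).comp_hasFDerivAt (α, θ) hproj2
        refine (hc.mul hs).congr_fderiv ?_
        ext v <;>
          simp [hsθ, hcθ, dif_pos h, mul_comm, mul_left_comm, mul_assoc]
      · have hs : HasFDerivAt (fun p : (Fin (m+1) → ℝ) × (Fin m → ℝ) =>
            Real.sin (if h : (k:ℕ) < m then p.2 ⟨k, h⟩ else Real.pi / 2))
            (0 : ((Fin (m+1) → ℝ) × (Fin m → ℝ)) →L[ℝ] ℝ) (α, θ) := by
          simp only [dif_neg h]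
          exact hasFDerivAt_const _ _
        refine (hc.mul hs).congr_fderiv ?_
        ext v <;>
          simp [hsθ, hcθ, dif_neg h, mul_comm, mul_left_comm, mul_assoc]
    · apply hasFDerivAt_pi''
      intro k
      rw [hGdef, ContinuousLinearMap.proj_pi]
      have hproj1 : HasFDerivAt (fun p : (Fin (m+1) → ℝ) × (Fin m → ℝ) =>
          p.1 ⟨(k:ℕ)+1, by have := k.isLt; omega⟩)
          ((proj (⟨(k:ℕ)+1, by have := k.isLt; omega⟩ : Fin (m+1))).comp
            (fst ℝ (Fin (m+1) → ℝ) (Fin m → ℝ))) (α, θ) :=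
        ((proj (⟨(k:ℕ)+1, by have := k.isLt; omega⟩ : Fin (m+1))).comp
          (fst ℝ (Fin (m+1) → ℝ) (Fin m → ℝ))).hasFDerivAt
      have hproj2 : HasFDerivAt (fun p : (Fin (m+1) → ℝ) × (Fin m → ℝ) => p.2 k)
          ((proj k).comp (snd ℝ (Fin (m+1) → ℝ) (Fin m → ℝ))) (α, θ) :=
        ((proj k).comp (snd ℝ (Fin (m+1) → ℝ) (Fin m → ℝ))).hasFDerivAt
      have hs : HasFDerivAt (fun p : (Fin (m+1) → ℝ) × (Fin m → ℝ) =>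
          Real.sin (p.1 ⟨(k:ℕ)+1, by have := k.isLt; omega⟩))
          ((Real.cos (α ⟨(k:ℕ)+1, by have := k.isLt; omega⟩)) •
            ((proj (⟨(k:ℕ)+1, by have := k.isLt; omega⟩ : Fin (m+1))).comp
              (fst ℝ (Fin (m+1) → ℝ) (Fin m → ℝ)))) (α, θ) :=
        by have := (Real.hasDerivAt_sin (α ⟨(k:ℕ)+1, by have := k.isLt; omega⟩)).comp_hasFDerivAt (α, θ) hproj1; exact this
      have hc : HasFDerivAt (fun p : (Fin (m+1) → ℝ) × (Fin m → ℝ) => Real.cos (p.2 k))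
          ((-Real.sin (θ k)) • ((proj k).comp (snd ℝ (Fin (m+1) → ℝ) (Fin m → ℝ)))) (α, θ) :=
        by have := (Real.hasDerivAt_cos (θ k)).comp_hasFDerivAt (α, θ) hproj2; exact this
      refine (hs.mul hc).congr_fderiv ?_
      ext v <;>
      · simp only [ContinuousLinearMap.comp_apply, ContinuousLinearMap.add_apply,
          ContinuousLinearMap.smul_apply, ContinuousLinearMap.coe_comp', Function.comp_apply,
          ContinuousLinearMap.coe_fst', ContinuousLinearMap.coe_snd',
          ContinuousLinearMap.proj_apply, ContinuousLinearMap.inl_apply,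
          ContinuousLinearMap.inr_apply, Pi.zero_apply, smul_eq_mul, mul_zero, zero_mul,
          mul_one, add_zero, zero_add]
        ring
  -- matrix entries
  set B := (Pi.basisFun ℝ (Fin (m+1))).prod (Pi.basisFun ℝ (Fin m)) with hB
  set M := LinearMap.toMatrix B B (F.prod G : _ →ₗ[ℝ] _) with hM
  have hdet : (fderiv ℝ T (α, θ)).det = M.det := by
    rw [hT'.fderiv, hM, LinearMap.det_toMatrix]
  have h11 : ∀ k l : Fin (m+1), M (Sum.inl k) (Sum.inl l) =
      (if l = k then -(Real.sin (α k) * sθ k) else 0) := by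
    intro k l
    rw [hM, LinearMap.toMatrix_apply]
    simp [hB, Module.Basis.prod_repr_inl, Module.Basis.prod_apply_inl_fst, Pi.basisFun_repr,
      Pi.basisFun_apply, Pi.single_apply]
    rw [hFdef]
    rcases eq_or_ne l k with hkl | hkl
    · subst hkl
      simp [ContinuousLinearMap.pi_apply, Pi.single_apply]
      split_ifs <;> simp
    · simp [ContinuousLinearMap.pi_apply, Pi.single_apply, hkl, Ne.symm hkl]
      split_ifs <;> simp
  have h12 : ∀ (k : Fin (m+1)) (l : Fin m), (l:ℕ) ≠ (k:ℕ) →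
      M (Sum.inl k) (Sum.inr l) = 0 := by
    intro k l hne
    rw [hM, LinearMap.toMatrix_apply]
    simp [hB, Module.Basis.prod_repr_inl, Module.Basis.prod_apply_inr_fst, Pi.basisFun_repr,
      Pi.basisFun_apply, Pi.single_apply]
    rw [hFdef]
    simp only [ContinuousLinearMap.pi_apply, ContinuousLinearMap.add_apply,
      ContinuousLinearMap.smul_apply, ContinuousLinearMap.coe_comp', Function.comp_apply,
      ContinuousLinearMap.coe_fst', ContinuousLinearMap.coe_snd',
      ContinuousLinearMap.proj_apply, Pi.zero_apply, smul_eq_mul, mul_zero, zero_add]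
    split_ifs with h
    · simp only [ContinuousLinearMap.coe_comp', Function.comp_apply,
        ContinuousLinearMap.coe_snd', ContinuousLinearMap.proj_apply]
      rw [Pi.single_apply]
      rw [if_neg (by intro hh; apply hne; rw [← hh])]
      simp
    · simp
  have h21 : ∀ (k : Fin m) (l : Fin (m+1)), (l:ℕ) ≠ (k:ℕ)+1 →
      M (Sum.inr k) (Sum.inl l) = 0 := by
    intro k l hne
    rw [hM, LinearMap.toMatrix_apply]
    simp [hB, Module.Basis.prod_repr_inr, Module.Basis.prod_apply_inl_snd, Pi.basisFun_repr,
      Pi.basisFun_apply, Pi.single_apply]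
    rw [hGdef]
    simp only [ContinuousLinearMap.pi_apply, ContinuousLinearMap.add_apply,
      ContinuousLinearMap.smul_apply, ContinuousLinearMap.coe_comp', Function.comp_apply,
      ContinuousLinearMap.coe_fst', ContinuousLinearMap.coe_snd',
      ContinuousLinearMap.proj_apply, Pi.zero_apply, smul_eq_mul, mul_zero, add_zero]
    rw [Pi.single_apply]
    rw [if_neg (by intro hh; apply hne; rw [← hh])]
    simp
  have h22 : ∀ k l : Fin m, M (Sum.inr k) (Sum.inr l) =
      (if l = k then -(Real.sin (α ⟨(k:ℕ)+1, by have := k.isLt; omega⟩) * Real.sin (θ k))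
        else 0) := by
    intro k l
    rw [hM, LinearMap.toMatrix_apply]
    simp [hB, Module.Basis.prod_repr_inr, Module.Basis.prod_apply_inr_snd, Pi.basisFun_repr,
      Pi.basisFun_apply, Pi.single_apply]
    rw [hGdef]
    simp only [ContinuousLinearMap.pi_apply, ContinuousLinearMap.add_apply,
      ContinuousLinearMap.smul_apply, ContinuousLinearMap.coe_comp', Function.comp_apply,
      ContinuousLinearMap.coe_fst', ContinuousLinearMap.coe_snd',
      ContinuousLinearMap.proj_apply, Pi.zero_apply, smul_eq_mul, mul_zero, zero_add]
    rw [Pi.single_apply]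
    rcases eq_or_ne l k with hkl | hkl
    · subst hkl; simp
    · rw [if_neg (Ne.symm hkl), if_neg hkl]; simp
  have hMdet : M.det = (∏ k : Fin (m+1), -(Real.sin (α k) * sθ k)) *
      ∏ k : Fin m, -(Real.sin (α ⟨(k:ℕ)+1, by have := k.isLt; omega⟩) * Real.sin (θ k)) := by
    rw [auxdet m M (fun k l h => by rw [h11]; exact if_neg h) h12 h21
      (fun k l h => by rw [h22]; exact if_neg h)]
    congr 1
    · exact Finset.prod_congr rfl fun k _ => by rw [h11, if_pos rfl]
    · exact Finset.prod_congr rfl fun k _ => by rw [h22, if_pos rfl]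
  -- positivity facts
  have pi_pos := Real.pi_pos
  have hspos : ∀ k : Fin (m+1), 0 < Real.sin (α k) := fun k =>
    Real.sin_pos_of_pos_of_lt_pi (hα k).1 (lt_trans (hα k).2 (by linarith))
  have hθpos : ∀ k : Fin m, 0 < Real.sin (θ k) := fun k =>
    Real.sin_pos_of_pos_of_lt_pi (hθ k).1 (lt_trans (hθ k).2 (by linarith))
  have hsθpos : ∀ k : Fin (m+1), 0 < sθ k := by
    intro k
    simp only [hsθ]
    split_ifs with h
    · exact hθpos _
    · rw [Real.sin_pi_div_two]; norm_num
  have habs : |(fderiv ℝ T (α, θ)).det| =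
      ((∏ k : Fin (m+1), Real.sin (α k) * sθ k) *
        ∏ k : Fin m, Real.sin (α ⟨(k:ℕ)+1, by have := k.isLt; omega⟩) * Real.sin (θ k)) := by
    rw [hdet, hMdet, abs_mul, Finset.abs_prod, Finset.abs_prod]
    congr 1 <;> refine Finset.prod_congr rfl fun k _ => ?_
    · rw [abs_neg, abs_of_pos (mul_pos (hspos k) (hsθpos k))]
    · rw [abs_neg, abs_of_pos (mul_pos (hspos _) (hθpos k))]
  rw [habs]
  -- product manipulation
  have hsplit1 : (∏ k : Fin (m+1), Real.sin (α k) * sθ k) =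
      (∏ k : Fin (m+1), Real.sin (α k)) * ∏ k : Fin (m+1), sθ k :=
    Finset.prod_mul_distrib
  have hsplit2 : (∏ k : Fin m, Real.sin (α ⟨(k:ℕ)+1, by have := k.isLt; omega⟩) *
      Real.sin (θ k)) = (∏ k : Fin m, Real.sin (α ⟨(k:ℕ)+1, by have := k.isLt; omega⟩)) *
      ∏ k : Fin m, Real.sin (θ k) :=
    Finset.prod_mul_distrib
  have hsθprod : (∏ k : Fin (m+1), sθ k) = ∏ k : Fin m, Real.sin (θ k) := by
    rw [Fin.prod_univ_castSucc]
    have hlast : sθ (Fin.last m) = 1 := by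
      simp only [hsθ]
      simp only [Fin.val_last, lt_self_iff_false, dif_neg, not_false_iff]
      exact Real.sin_pi_div_two
    rw [hlast, mul_one]
    refine Finset.prod_congr rfl fun k _ => ?_
    simp only [hsθ, Fin.coe_castSucc, k.isLt, dif_pos]
  have hαprod : (∏ k : Fin (m+1), Real.sin (α k)) =
      (∏ k : Fin m, Real.sin (α k.castSucc)) * Real.sin (α (Fin.last m)) :=
    Fin.prod_univ_castSucc _
  have hαsucc : (∏ k : Fin m, Real.sin (α ⟨(k:ℕ)+1, by have := k.isLt; omega⟩)) *
      Real.sin (α ⟨0, by omega⟩) =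
      (∏ k : Fin m, Real.sin (α k.castSucc)) * Real.sin (α (Fin.last m)) := by
    have h1 : (∏ k : Fin (m+1), Real.sin (α k)) =
        Real.sin (α 0) * ∏ k : Fin m, Real.sin (α k.succ) := Fin.prod_univ_succ _
    have h2 : ∀ k : Fin m, Real.sin (α k.succ) =
        Real.sin (α ⟨(k:ℕ)+1, by have := k.isLt; omega⟩) := fun k => rfl
    have h3 : α (0 : Fin (m+1)) = α ⟨0, by omega⟩ := rfl
    rw [← hαprod, h1]
    simp only [h2]
    rw [h3]
    ring
  have hs0 : Real.sin (α ⟨0, by omega⟩) ≠ 0 := ne_of_gt (hspos _)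
  have hrhs : ∀ k : Fin m, α k.castSucc = α ⟨k, by have := k.isLt; omega⟩ := fun k => rfl
  rw [hsplit1, hsplit2, hsθprod, hαprod]
  have hfinal : (∏ k : Fin m, Real.sin (α ⟨(k:ℕ)+1, by have := k.isLt; omega⟩)) =
      (∏ k : Fin m, Real.sin (α k.castSucc)) * Real.sin (α (Fin.last m)) /
        Real.sin (α ⟨0, by omega⟩) := by
    rw [← hαsucc, mul_div_assoc, div_self hs0, mul_one]
  rw [hfinal]
  have hsum : ∏ k : Fin m, (Real.sin (α ⟨k, by have := k.isLt; omega⟩)) ^ 2 *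
      (Real.sin (θ k)) ^ 2 =
      (∏ k : Fin m, Real.sin (α k.castSucc)) ^ 2 * (∏ k : Fin m, Real.sin (θ k)) ^ 2 := by
    rw [Finset.prod_mul_distrib, ← Finset.prod_pow, ← Finset.prod_pow]
    congr 1
  rw [hsum]
  have hlasteq : α (Fin.last m) = α ⟨m, by omega⟩ := rfl
  rw [hlasteq]
  field_simp

theorem angle_map_jacobian (n : ℕ) (hn : 1 ≤ n)
    (T : (Fin n → ℝ) × (Fin (n-1) → ℝ) → (Fin n → ℝ) × (Fin (n-1) → ℝ))
    (hT : T = fun p : (Fin n → ℝ) × (Fin (n-1) → ℝ) =>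
      (fun k : Fin n => Real.cos (p.1 k) *
        Real.sin (if h : (k : ℕ) < n - 1 then p.2 ⟨k, h⟩ else Real.pi / 2),
       fun k : Fin (n-1) => Real.sin (p.1 ⟨(k : ℕ) + 1, by have := k.isLt; omega⟩) *
         Real.cos (p.2 k)))
    (α : Fin n → ℝ) (θ : Fin (n-1) → ℝ)
    (hα : ∀ k, α k ∈ Set.Ioo 0 (Real.pi / 2))
    (hθ : ∀ k, θ k ∈ Set.Ioo 0 (Real.pi / 2)) :
    |(fderiv ℝ T (α, θ)).det| =
      (Real.sin (α ⟨n - 1, by omega⟩)) ^ 2 / Real.sin (α ⟨0, hn⟩) *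
        ∏ k : Fin (n-1),
          (Real.sin (α ⟨k, by have := k.isLt; omega⟩)) ^ 2 * (Real.sin (θ k)) ^ 2 := by
  obtain ⟨m, rfl⟩ : ∃ m, n = m + 1 := ⟨n - 1, by omega⟩
  exact auxmain m T hT α θ hα hθ
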